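/- Let μ be a partition of n and 0 < m ≤ n. Then the one-row character satisfies χ^{(m)}_μ(q) = (q^n/(q−1)^{l(μ)}) · Σ_{τ ∈ C(μ;m)} (1−q^{-1})^{l(τ)+l(μ−τ)}. -/

import Mathlib

open Finset

noncomputable section

abbrev FF : Type := RatFunc ℚ

/-- The ring Λ of symmetric functions over ℚ(t), as the polynomial ring in the
algebraically independent power sums `pp 1, pp 2, …`. -/
abbrev SymF : Type := MvPolynomial ℕ+ FF

/-- The variable t of the ground field ℚ(t). -/
def tv : FF := RatFunc.X

/-- the power sum p_n -/
def pp (n : ℕ+) : SymF := MvPolynomial.X n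

/-- q_n(a), defined by Σ_{n≥0} q_n(a) z^n = exp(Σ_{n≥1} ((1-a^n)/n) p_n z^n);
equivalently (taking the logarithmic derivative of the generating function)
by q_0 = 1 and n·q_n = Σ_{k=1}^{n} (1-a^k) p_k q_{n-k}. -/
def qn (a : FF) : ℕ → SymF
  | 0 => 1
  | n + 1 =>
      (((n : FF) + 1)⁻¹) • ∑ k ∈ Finset.range (n + 1),
        (MvPolynomial.C (1 - a ^ (k + 1))) * pp ⟨k + 1, Nat.succ_pos k⟩ * qn a (n - k)
  termination_by n => n
  decreasing_by omega

/-- q̂_n(a), defined by Σ_{n≥0} q̂_n(a) z^n = exp(Σ_{n≥1} ((1-a^n)/n)(1+p_n) z^n);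
equivalently by q̂_0 = 1 and n·q̂_n = Σ_{k=1}^{n} (1-a^k)(1+p_k) q̂_{n-k}. -/
def qhat (a : FF) : ℕ → SymF
  | 0 => 1
  | n + 1 =>
      (((n : FF) + 1)⁻¹) • ∑ k ∈ Finset.range (n + 1),
        (MvPolynomial.C (1 - a ^ (k + 1))) * (1 + pp ⟨k + 1, Nat.succ_pos k⟩) * qhat a (n - k)
  termination_by n => n
  decreasing_by omega

/-- the number of nonzero parts of a composition -/
def ell {l : ℕ} (mu : Fin l → ℕ) : ℕ := (Finset.univ.filter fun i => mu i ≠ 0).card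

/-- q̂_μ(a) = ∏_i q̂_{μ_i}(a). -/
def qhatProd (a : FF) {l : ℕ} (mu : Fin l → ℕ) : SymF := ∏ i, qhat a (mu i)

/-- q_μ(a) = ∏_i q_{μ_i}(a). -/
def qnProd (a : FF) {l : ℕ} (mu : Fin l → ℕ) : SymF := ∏ i, qn a (mu i)

/-- z_λ, where the finitely supported function d records the multiplicities of the parts. -/
def zfac (d : ℕ+ →₀ ℕ) : FF :=
  ∏ i ∈ d.support, (((i : ℕ) : FF) ^ (d i) * (Nat.factorial (d i) : FF))

/-- The Hall inner product on Λ, determined by ⟨p_λ, p_μ⟩ = δ_{λμ} z_λ. -/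
def hall (f g : SymF) : FF :=
  ∑ d ∈ f.support, MvPolynomial.coeff d f * MvPolynomial.coeff d g * zfac d

/-- the complete homogeneous symmetric function h_n, defined by
Σ_{n≥0} h_n z^n = exp(Σ_{n≥1} p_n z^n / n); equivalently by h_0 = 1 and
n·h_n = Σ_{k=1}^{n} p_k h_{n-k} (Newton's identity). -/
def hh : ℕ → SymF
  | 0 => 1
  | n + 1 =>
      (((n : FF) + 1)⁻¹) • ∑ k ∈ Finset.range (n + 1),
        pp ⟨k + 1, Nat.succ_pos k⟩ * hh (n - k)
  termination_by n => n
  decreasing_by omega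

/-- h_k for k ∈ ℤ, with h_k = 0 for k < 0. -/
def hZ (k : ℤ) : SymF := if 0 ≤ k then hh k.toNat else 0

/-- The Schur function s_λ (via the Jacobi–Trudi formula). -/
def schur {r : ℕ} (lam : Fin r → ℕ) : SymF :=
  Matrix.det (Matrix.of fun i j : Fin r => hZ ((lam i : ℤ) + (j : ℤ) - (i : ℤ)))

/-- The variable q of ℚ(q) (the same as tv, renamed for readability). -/
def qv : FF := RatFunc.X

/-- C(μ;k): compositions τ ⊂ μ with |τ| = k. -/
def Cset {l : ℕ} (mu : Fin l → ℕ) (k : ℕ) : Finset (Fin l → ℕ) :=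
  (Finset.Iic mu).filter fun τ => ∑ i, τ i = k

/-- The irreducible character χ^λ_μ(q) of the q-rook monoid algebra R_n(q), via the
Frobenius formula χ^λ_μ(q) = (q^{|μ|}/(q-1)^{l(μ)}) ⟨q̂_μ(q⁻¹), s_λ⟩. -/
def chi {r l : ℕ} (lam : Fin r → ℕ) (mu : Fin l → ℕ) : FF :=
  qv ^ (∑ i, mu i) / (qv - 1) ^ (ell mu) * hall (qhatProd qv⁻¹ mu) (schur lam)


noncomputable instance : CharZero FF :=
  charZero_of_injective_algebraMap (algebraMap ℚ FF).injective

def phi : SymF →ₐ[FF] Polynomial FF :=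
  MvPolynomial.aeval fun i : ℕ+ => (Polynomial.X : Polynomial FF) ^ (i : ℕ)

def wt (d : ℕ+ →₀ ℕ) : ℕ := d.sum fun i k => (i : ℕ) * k

lemma schur_one_row (m : ℕ) : schur (fun _ : Fin 1 => m) = hh m := by
  simp [schur, Matrix.det_fin_one, hZ]

lemma zfac_eq_prod (d : ℕ+ →₀ ℕ) (S : Finset ℕ+) (hS : d.support ⊆ S) :
    zfac d = ∏ i ∈ S, (((i : ℕ) : FF) ^ (d i) * (Nat.factorial (d i) : FF)) := by
  rw [zfac]
  exact Finset.prod_subset hS (by intro x _ hx; simp [Finsupp.notMem_support_iff.mp hx])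

lemma zfac_add_single (d : ℕ+ →₀ ℕ) (j : ℕ+) :
    zfac (d + Finsupp.single j 1) = zfac d * (j : ℕ) * ((d j + 1 : ℕ) : FF) := by
  classical
  set S := d.support ∪ {j} with hS
  have h1 : d.support ⊆ S := Finset.subset_union_left
  have h2 : (d + Finsupp.single j 1).support ⊆ S := by
    refine (Finsupp.support_add).trans ?_
    apply Finset.union_subset_union (le_refl _)
    simp [Finsupp.support_single_ne_zero]
  have hjS : j ∈ S := by simp [hS]
  rw [zfac_eq_prod d S h1, zfac_eq_prod _ S h2]
  rw [← Finset.mul_prod_erase S _ hjS, ← Finset.mul_prod_erase S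
    (fun i => ((i : ℕ) : FF) ^ (d i) * (Nat.factorial (d i) : FF)) hjS]
  have hrest : ∀ i ∈ S.erase j,
      (((i:ℕ):FF)) ^ (((d + Finsupp.single j 1) : ℕ+ →₀ ℕ) i) * (Nat.factorial (((d + Finsupp.single j 1) : ℕ+ →₀ ℕ) i) : FF)
      = (((i:ℕ):FF)) ^ (d i) * (Nat.factorial (d i) : FF) := by
    intro i hi
    have hij : i ≠ j := (Finset.mem_erase.mp hi).1
    rw [Finsupp.add_apply, Finsupp.single_apply, if_neg (Ne.symm hij), add_zero]
  rw [Finset.prod_congr rfl hrest]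
  have hdj : ((d + Finsupp.single j 1) : ℕ+ →₀ ℕ) j = d j + 1 := by simp
  rw [hdj, pow_succ, Nat.factorial_succ]
  push_cast
  ring

lemma wt_add (d e : ℕ+ →₀ ℕ) : wt (d + e) = wt d + wt e := by
  unfold wt
  exact Finsupp.sum_add_index' (fun i => by simp) (fun i k1 k2 => Nat.mul_add _ _ _)

lemma wt_single (j : ℕ+) : wt (Finsupp.single j 1) = (j : ℕ) := by
  unfold wt
  rw [Finsupp.sum_single_index] <;> simp

lemma wt_eq_zero {d : ℕ+ →₀ ℕ} (h : wt d = 0) : d = 0 := by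
  unfold wt Finsupp.sum at h
  ext i
  simp only [Finsupp.coe_zero, Pi.zero_apply]
  by_contra hi
  have hmem : i ∈ d.support := Finsupp.mem_support_iff.mpr hi
  have h2 := Finset.sum_eq_zero_iff.mp h i hmem
  have hpos := i.pos
  exact Nat.mul_ne_zero (by omega) hi h2

lemma sub_add_single {d : ℕ+ →₀ ℕ} {j : ℕ+} (h : j ∈ d.support) :
    (d - Finsupp.single j 1) + Finsupp.single j 1 = d := by
  have hj : d j ≠ 0 := Finsupp.mem_support_iff.mp h
  ext i
  simp only [Finsupp.add_apply, Finsupp.tsub_apply, Finsupp.single_apply]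
  by_cases hij : j = i
  · subst hij; simp; omega
  · simp [hij]

lemma mem_supp_le_wt {d : ℕ+ →₀ ℕ} {j : ℕ+} (h : j ∈ d.support) : (j : ℕ) ≤ wt d := by
  have hj : d j ≠ 0 := Finsupp.mem_support_iff.mp h
  have h1 : (j : ℕ) * d j ≤ wt d := by
    unfold wt Finsupp.sum
    exact Finset.single_le_sum (f := fun i : ℕ+ => (i : ℕ) * d i) (fun i _ => Nat.zero_le _) h
  calc (j : ℕ) ≤ (j : ℕ) * d j := Nat.le_mul_of_pos_right _ (Nat.pos_of_ne_zero hj)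
  _ ≤ wt d := h1

lemma sum_wt (d : ℕ+ →₀ ℕ) :
    ∑ j ∈ d.support, (((j : ℕ+) : ℕ) : FF) * ((d j : ℕ) : FF) = ((wt d : ℕ) : FF) := by
  unfold wt Finsupp.sum
  push_cast
  rfl

lemma hh_coeff : ∀ m (d : ℕ+ →₀ ℕ),
    MvPolynomial.coeff d (hh m) * zfac d = if wt d = m then 1 else 0 := by
  intro m
  induction m using Nat.strong_induction_on with
  | _ m ih =>
    match m with
    | 0 =>
      intro d
      rw [hh, MvPolynomial.coeff_one]
      by_cases hd : d = 0
      · subst hd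
        simp [zfac, wt]
      · have hw : wt d ≠ 0 := fun h => hd (wt_eq_zero h)
        rw [if_neg (fun h => hd h.symm), if_neg hw, zero_mul]
    | n + 1 =>
      intro d
      classical
      rw [hh, MvPolynomial.coeff_smul, MvPolynomial.coeff_sum]
      simp only [smul_eq_mul]
      rw [mul_assoc, Finset.sum_mul]
      have hterm : ∀ x ∈ Finset.range (n + 1),
          MvPolynomial.coeff d (pp ⟨x + 1, Nat.succ_pos x⟩ * hh (n - x)) * zfac d =
          if (⟨x + 1, Nat.succ_pos x⟩ : ℕ+) ∈ d.support ∧ wt d = n + 1 then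
            ((x + 1 : ℕ) : FF) * ((d ⟨x + 1, Nat.succ_pos x⟩ : ℕ) : FF) else 0 := by
        intro x hx
        have hxn : x ≤ n := Nat.lt_succ_iff.mp (Finset.mem_range.mp hx)
        set j : ℕ+ := ⟨x + 1, Nat.succ_pos x⟩ with hjdef
        rw [pp, MvPolynomial.coeff_X_mul']
        by_cases hj : j ∈ d.support
        · rw [if_pos hj]
          set d' := d - Finsupp.single j 1 with hd'
          have hdd : d' + Finsupp.single j 1 = d := sub_add_single hj
          have hz : zfac d = zfac d' * ((j : ℕ) : FF) * ((d' j + 1 : ℕ) : FF) := by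
            rw [← hdd, zfac_add_single]
          have hd'j : d' j + 1 = d j := by
            have := congrArg (fun f : ℕ+ →₀ ℕ => f j) hdd
            simpa using this
          have hwd : wt d = wt d' + (x + 1) := by
            rw [← hdd, wt_add, wt_single]
            rfl
          have hih := ih (n - x) (by omega) d'
          have hcalc : MvPolynomial.coeff d' (hh (n - x)) * zfac d =
              (if wt d' = n - x then 1 else 0) * (((j : ℕ) : FF) * ((d' j + 1 : ℕ) : FF)) := by
            rw [hz, ← hih]; push_cast; ring
          rw [hcalc]
          by_cases hw : wt d = n + 1
          · have hwx : wt d' = n - x := by omega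
            rw [if_pos hwx, if_pos ⟨hj, hw⟩, hd'j, one_mul]
            norm_cast
          · have hwx : wt d' ≠ n - x := by omega
            rw [if_neg hwx, if_neg (by tauto), zero_mul]
        · rw [if_neg hj, zero_mul, if_neg (by tauto)]
      rw [Finset.sum_congr rfl hterm]
      by_cases hw : wt d = n + 1
      · simp only [hw, and_true]
        have hsum : ∑ x ∈ Finset.range (n + 1),
            (if (⟨x + 1, Nat.succ_pos x⟩ : ℕ+) ∈ d.support then
              ((x + 1 : ℕ) : FF) * ((d ⟨x + 1, Nat.succ_pos x⟩ : ℕ) : FF) else 0)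
            = ∑ j ∈ d.support, ((j : ℕ) : FF) * ((d j : ℕ) : FF) := by
          rw [← Finset.sum_filter]
          refine Finset.sum_bij' (fun x hx => (⟨x + 1, Nat.succ_pos x⟩ : ℕ+))
            (fun j hj => (j : ℕ) - 1) ?_ ?_ ?_ ?_ ?_
          · intro x hx
            exact (Finset.mem_filter.mp hx).2
          · intro j hj
            have h1 : (j : ℕ) ≤ n + 1 := hw ▸ mem_supp_le_wt hj
            have h2 := j.pos
            have hjj : (⟨(j : ℕ) - 1 + 1, Nat.succ_pos _⟩ : ℕ+) = j := by
              apply PNat.coe_inj.mp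
              show (j : ℕ) - 1 + 1 = (j : ℕ)
              omega
            refine Finset.mem_filter.mpr ⟨?_, ?_⟩
            · show ((j : ℕ) - 1) ∈ Finset.range (n + 1)
              exact Finset.mem_range.mpr (by omega)
            show (⟨(j : ℕ) - 1 + 1, Nat.succ_pos _⟩ : ℕ+) ∈ d.support
            rw [hjj]; exact hj
          · intro x hx
            show (⟨x + 1, Nat.succ_pos x⟩ : ℕ+).val - 1 = x
            simp
          · intro j hj
            show (⟨(j : ℕ) - 1 + 1, Nat.succ_pos _⟩ : ℕ+) = j
            apply PNat.coe_inj.mp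
            show (j : ℕ) - 1 + 1 = (j : ℕ)
            have := j.pos
            omega
          · intro x hx; rfl
        rw [hsum, sum_wt, hw, if_pos trivial]
        push_cast
        exact inv_mul_cancel₀ (by exact_mod_cast (Nat.cast_ne_zero (R := FF)).mpr (Nat.succ_ne_zero n))
      · simp [hw]

lemma hall_hh (f : SymF) (m : ℕ) : hall f (hh m) = (phi f).coeff m := by
  rw [hall]
  have h1 : ∀ d ∈ f.support, MvPolynomial.coeff d f * MvPolynomial.coeff d (hh m) * zfac d
      = MvPolynomial.coeff d f * (if wt d = m then 1 else 0) := by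
    intro d _; rw [mul_assoc, hh_coeff]
  rw [Finset.sum_congr rfl h1, phi, MvPolynomial.aeval_def, MvPolynomial.eval₂_eq,
    Polynomial.finset_sum_coeff]
  apply Finset.sum_congr rfl
  intro d _
  have hX : ∏ i ∈ d.support, ((Polynomial.X : Polynomial FF) ^ (i : ℕ)) ^ (d i)
      = Polynomial.X ^ (wt d) := by
    rw [wt, Finsupp.sum, ← Finset.prod_pow_eq_pow_sum]
    exact Finset.prod_congr rfl fun i _ => by rw [← pow_mul]
  rw [hX, Polynomial.algebraMap_eq, Polynomial.coeff_C_mul, Polynomial.coeff_X_pow]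
  simp [eq_comm]

def Q (a : FF) (m : ℕ) : Polynomial FF :=
  ∑ j ∈ Finset.range (m + 1),
    Polynomial.C ((1 - a) ^ ((if j = 0 then 0 else 1) + (if j = m then 0 else 1)))
      * Polynomial.X ^ j

lemma Q_coeff (a : FF) (m j : ℕ) : (Q a m).coeff j =
    if j ≤ m then (1 - a) ^ ((if j = 0 then 0 else 1) + (if j = m then 0 else 1)) else 0 := by
  rw [Q, Polynomial.finset_sum_coeff]
  simp only [Polynomial.coeff_C_mul, Polynomial.coeff_X_pow, mul_ite, mul_one, mul_zero]
  rw [Finset.sum_ite_eq (Finset.range (m + 1)) j]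
  simp [Nat.lt_succ_iff]

lemma geom_aux (a : FF) (n : ℕ) :
    ∑ k ∈ Finset.range n, (1 - a ^ (k + 1)) * (1 - a)
      = (n : FF) * (1 - a) - (a - a ^ (n + 1)) := by
  induction n with
  | zero => simp
  | succ n ih =>
    rw [Finset.sum_range_succ, ih]
    push_cast
    ring

lemma sum_cut (c : ℕ → FF) (K N : ℕ) (hKN : K ≤ N) :
    ∑ k ∈ Finset.range (N + 1), (if k ≤ K then c k else 0)
      = ∑ k ∈ Finset.range (K + 1), c k := by
  have h2 : ∀ x ∈ Finset.range (N + 1), x ∉ Finset.range (K + 1) →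
      (if x ≤ K then c x else 0) = 0 := by
    intro x _ hx2
    rw [if_neg]
    simp at hx2
    omega
  rw [← Finset.sum_subset (Finset.range_subset_range.mpr (Nat.succ_le_succ hKN)) h2]
  exact Finset.sum_congr rfl fun k hk => if_pos (by simp at hk; omega)

lemma sum_bpow (a : FF) (K e : ℕ) :
    ∑ k ∈ Finset.range (K + 1), (1 - a ^ (k + 1)) * (1 - a) ^ (if k = K then e else e + 1)
      = ((K : FF) + 1) * (1 - a) ^ (e + 1) := by
  rw [Finset.sum_range_succ, if_pos rfl]
  have h : ∀ k ∈ Finset.range K,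
      (1 - a ^ (k + 1)) * (1 - a) ^ (if k = K then e else e + 1)
        = ((1 - a ^ (k + 1)) * (1 - a)) * (1 - a) ^ e := by
    intro k hk
    rw [if_neg (by simp at hk; omega)]
    ring
  rw [Finset.sum_congr rfl h, ← Finset.sum_mul, geom_aux]
  ring

set_option maxHeartbeats 2000000 in
lemma key_coeff (a : FF) (n j : ℕ) :
    ∑ k ∈ Finset.range (n + 1),
      (1 - a ^ (k + 1)) * ((Q a (n - k)).coeff j +
        (if k + 1 ≤ j then (Q a (n - k)).coeff (j - (k + 1)) else 0))
      = ((n : FF) + 1) * (Q a (n + 1)).coeff j := by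
  simp only [Q_coeff]
  by_cases hj0 : j = 0
  · subst hj0
    have hcong : ∀ k ∈ Finset.range (n + 1),
        (1 - a ^ (k + 1)) * ((if 0 ≤ n - k then
            (1 - a) ^ ((if (0:ℕ) = 0 then 0 else 1) + (if 0 = n - k then 0 else 1)) else 0) +
          (if k + 1 ≤ 0 then (if 0 - (k + 1) ≤ n - k then
            (1 - a) ^ ((if 0 - (k + 1) = 0 then 0 else 1) +
              (if 0 - (k + 1) = n - k then 0 else 1)) else 0) else 0))
        = if k ≤ n then (1 - a ^ (k + 1)) * (1 - a) ^ (if k = n then 0 else 0 + 1) else 0 := by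
      intro k hk
      simp only [Finset.mem_range] at hk
      split_ifs <;> first | ring1 | (exfalso; omega)
    rw [Finset.sum_congr rfl hcong, sum_cut _ n n le_rfl, sum_bpow]
    split_ifs <;> first | (push_cast; ring1) | (exfalso; omega) | (exact ((by assumption : False)).elim)
  · by_cases hjn : j = n + 1
    · subst hjn
      have hcong : ∀ k ∈ Finset.range (n + 1),
          (1 - a ^ (k + 1)) * ((if n + 1 ≤ n - k then
              (1 - a) ^ ((if n + 1 = 0 then 0 else 1) + (if n + 1 = n - k then 0 else 1)) else 0) +
            (if k + 1 ≤ n + 1 then (if n + 1 - (k + 1) ≤ n - k then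
              (1 - a) ^ ((if n + 1 - (k + 1) = 0 then 0 else 1) +
                (if n + 1 - (k + 1) = n - k then 0 else 1)) else 0) else 0))
          = if k ≤ n then (1 - a ^ (k + 1)) * (1 - a) ^ (if k = n then 0 else 0 + 1) else 0 := by
        intro k hk
        simp only [Finset.mem_range] at hk
        split_ifs <;> first | ring1 | (exfalso; omega)
      rw [Finset.sum_congr rfl hcong, sum_cut _ n n le_rfl, sum_bpow]
      split_ifs <;> first | (push_cast; ring1) | (exfalso; omega) | (exact ((by assumption : False)).elim)
    · by_cases hjn2 : j ≤ n
      · -- 0 < j ≤ n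
        have hcong : ∀ k ∈ Finset.range (n + 1),
            (1 - a ^ (k + 1)) * ((if j ≤ n - k then
                (1 - a) ^ ((if j = 0 then 0 else 1) + (if j = n - k then 0 else 1)) else 0) +
              (if k + 1 ≤ j then (if j - (k + 1) ≤ n - k then
                (1 - a) ^ ((if j - (k + 1) = 0 then 0 else 1) +
                  (if j - (k + 1) = n - k then 0 else 1)) else 0) else 0))
            = (if k ≤ n - j then (1 - a ^ (k + 1)) * (1 - a) ^ (if k = n - j then 1 else 1 + 1) else 0)
              + (if k ≤ j - 1 then (1 - a ^ (k + 1)) * (1 - a) ^ (if k = j - 1 then 1 else 1 + 1) else 0) := by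
          intro k hk
          simp only [Finset.mem_range] at hk
          split_ifs <;> first | ring1 | (exfalso; omega)
        rw [Finset.sum_congr rfl hcong, Finset.sum_add_distrib,
          sum_cut _ (n - j) n (by omega), sum_cut _ (j - 1) n (by omega), sum_bpow, sum_bpow]
        rw [Nat.cast_sub (by omega : j ≤ n), Nat.cast_sub (by omega : 1 ≤ j)]
        split_ifs <;> first | (push_cast; ring1) | (exfalso; omega) | (exact ((by assumption : False)).elim)
      · -- j > n + 1
        rw [if_neg (by omega : ¬ j ≤ n + 1), mul_zero]
        apply Finset.sum_eq_zero
        intro k hk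
        simp only [Finset.mem_range] at hk
        split_ifs <;> first | ring1 | (exfalso; omega)

lemma key (a : FF) (n : ℕ) :
    ∑ k ∈ Finset.range (n + 1),
      Polynomial.C (1 - a ^ (k + 1)) * (1 + Polynomial.X ^ (k + 1)) * Q a (n - k)
      = ((n : FF) + 1) • Q a (n + 1) := by
  ext j
  rw [Polynomial.finset_sum_coeff, Polynomial.coeff_smul, smul_eq_mul, ← key_coeff a n j]
  apply Finset.sum_congr rfl
  intro k hk
  have : Polynomial.C (1 - a ^ (k + 1)) * (1 + Polynomial.X ^ (k + 1)) * Q a (n - k)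
      = Polynomial.C (1 - a ^ (k + 1)) * (Q a (n - k) + Q a (n - k) * Polynomial.X ^ (k + 1)) := by
    ring
  rw [this, Polynomial.coeff_C_mul, Polynomial.coeff_add, Polynomial.coeff_mul_X_pow']

lemma phi_C (c : FF) : phi (MvPolynomial.C c) = Polynomial.C c := by
  simp [phi, MvPolynomial.aeval_C, Polynomial.algebraMap_eq]

lemma phi_qhat (a : FF) : ∀ m, phi (qhat a m) = Q a m := by
  intro m
  induction m using Nat.strong_induction_on with
  | _ m ih =>
    match m with
    | 0 =>
      rw [qhat, map_one]
      rw [Q]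
      simp
    | n + 1 =>
      rw [qhat, map_smul, map_sum]
      have hterm : ∀ k ∈ Finset.range (n + 1),
          phi (MvPolynomial.C (1 - a ^ (k + 1)) * (1 + pp ⟨k + 1, Nat.succ_pos k⟩) * qhat a (n - k))
          = Polynomial.C (1 - a ^ (k + 1)) * (1 + Polynomial.X ^ (k + 1)) * Q a (n - k) := by
        intro k hk
        rw [map_mul, map_mul, map_add, map_one, ih (n - k) (by omega), phi_C]
        have hpp : phi (pp ⟨k + 1, Nat.succ_pos k⟩) = Polynomial.X ^ (k + 1) := by
          exact MvPolynomial.aeval_X (fun i : ℕ+ => (Polynomial.X : Polynomial FF) ^ (i : ℕ)) _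
        rw [hpp]
      rw [Finset.sum_congr rfl hterm, key, smul_smul,
        inv_mul_cancel₀ (by exact_mod_cast (Nat.cast_ne_zero (R := FF)).mpr (Nat.succ_ne_zero n) :
          ((n : FF) + 1) ≠ 0), one_smul]

lemma prod_Q_coeff (a : FF) {l : ℕ} (mu : Fin l → ℕ) (m : ℕ) :
    (∏ i, Q a (mu i)).coeff m = ∑ τ ∈ Cset mu m, (1 - a) ^ (ell τ + ell (mu - τ)) := by
  have h1 : (∏ i, Q a (mu i)) = ∑ τ ∈ Fintype.piFinset (fun i => Finset.range (mu i + 1)),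
      Polynomial.C (∏ i, (1 - a) ^ ((if τ i = 0 then 0 else 1) + (if τ i = mu i then 0 else 1)))
        * Polynomial.X ^ (∑ i, τ i) := by
    simp only [Q]
    rw [Finset.prod_univ_sum]
    apply Finset.sum_congr rfl
    intro τ _
    rw [Finset.prod_mul_distrib, Finset.prod_pow_eq_pow_sum, map_prod]
  rw [h1, Polynomial.finset_sum_coeff]
  simp only [Polynomial.coeff_C_mul, Polynomial.coeff_X_pow, mul_ite, mul_one, mul_zero]
  rw [← Finset.sum_filter]
  have h2 : (Fintype.piFinset (fun i => Finset.range (mu i + 1))).filter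
      (fun τ => m = ∑ i, τ i) = Cset mu m := by
    ext τ
    simp [Cset, Fintype.mem_piFinset, Finset.mem_Iic, Nat.lt_succ_iff, Pi.le_def, eq_comm]
  rw [h2]
  apply Finset.sum_congr rfl
  intro τ hτ
  have hle : ∀ i, τ i ≤ mu i := by
    have := (Finset.mem_filter.mp hτ).1
    rw [Finset.mem_Iic] at this
    exact this
  rw [Finset.prod_pow_eq_pow_sum]
  congr 1
  rw [Finset.sum_add_distrib]
  congr 1
  · rw [ell, Finset.card_filter]
    apply Finset.sum_congr rfl
    intro i _
    by_cases h : τ i = 0 <;> simp [h]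
  · rw [ell, Finset.card_filter]
    apply Finset.sum_congr rfl
    intro i _
    have h2 := hle i
    by_cases h : τ i = mu i
    · simp [h, Pi.sub_apply]
    · rw [if_neg h, if_pos]
      show mu i - τ i ≠ 0
      omega


/-- For a partition μ ⊢ n and 0 < m ≤ n, the one-row character satisfies
χ^{(m)}_μ(q) = (q^n/(q-1)^{l(μ)})·Σ_{τ ∈ C(μ;m)} (1-q⁻¹)^{l(τ)+l(μ-τ)}. -/
theorem chi_one_row (l n m : ℕ) (mu : Fin l → ℕ)
    (hmu_anti : ∀ i j : Fin l, i ≤ j → mu j ≤ mu i) (hmu_pos : ∀ i, 0 < mu i)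
    (hmu_sum : ∑ i, mu i = n) (hm : 0 < m) (hmn : m ≤ n) :
    chi (fun _ : Fin 1 => m) mu =
      qv ^ n / (qv - 1) ^ ell mu *
        ∑ τ ∈ Cset mu m, (1 - qv⁻¹) ^ (ell τ + ell (mu - τ)) := by
  rw [chi, schur_one_row, hall_hh, hmu_sum]
  congr 1
  rw [qhatProd, map_prod]
  simp only [phi_qhat]
  rw [prod_Q_coeff]

end
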